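/- Let v : X → Y and u : X' → Y' be maps of finite sets, and let σ_X : X → X', σ_Y : Y → Y' be bijections with u ∘ σ_X = σ_Y ∘ v. Equip X, X', Y, Y' with total orders, and let X̄, X̄' be the reordered versions (the unique total orders making x ↦ (v(x),x) and x' ↦ (u(x'),x') order-preserving into the lexicographic products Ȳ ×ˡ X and Ȳ' ×ˡ X'). Suppose σ_Y : Ȳ → Ȳ' is order-preserving. Then σ_X : X̄ → X̄' is order-preserving if and only if σ_X is order-preserving (for the original orders) on each fibre of v. -/
import Mathlib


/-- Inductive step of the straightening lemma.  Let `v : X → Y`, `u : X' → Y'` be maps of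
finite totally ordered sets, `σX, σY` bijections with `u ∘ σX = σY ∘ v`.  Let `LX`
(resp. `LX'`) be the reordered total order on `X` (resp. `X'`), i.e. the unique order
making `x ↦ (v x, x)` (resp. `x' ↦ (u x', x')`) order-preserving into the lexicographic
product.  If `σY` is order preserving, then `σX` is order preserving for the reordered
orders iff `σX` is order preserving (for the original orders) on each fibre of `v`. -/
theorem stmt3 {X X' Y Y' : Type*} [Fintype X] [Fintype X']
    [LinearOrder X] [LinearOrder X'] [LinearOrder Y] [LinearOrder Y']
    (v : X → Y) (u : X' → Y') (σX : X ≃ X') (σY : Y ≃ Y')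
    (hcomm : ∀ x, u (σX x) = σY (v x))
    (LX : LinearOrder X) (LX' : LinearOrder X')
    (hLX : ∀ x₁ x₂ : X, LX.le x₁ x₂ ↔ (v x₁ < v x₂ ∨ (v x₁ = v x₂ ∧ x₁ ≤ x₂)))
    (hLX' : ∀ x₁ x₂ : X', LX'.le x₁ x₂ ↔ (u x₁ < u x₂ ∨ (u x₁ = u x₂ ∧ x₁ ≤ x₂)))
    (hσY : Monotone σY) :
    (∀ x₁ x₂ : X, LX.le x₁ x₂ → LX'.le (σX x₁) (σX x₂)) ↔
      (∀ x₁ x₂ : X, v x₁ = v x₂ → x₁ ≤ x₂ → σX x₁ ≤ σX x₂) := by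
  have hσY' : StrictMono σY := hσY.strictMono_of_injective σY.injective
  constructor
  · intro h x₁ x₂ hv hx
    have := h x₁ x₂ ((hLX x₁ x₂).2 (Or.inr ⟨hv, hx⟩))
    rcases (hLX' _ _).1 this with h1 | h2
    · rw [hcomm, hcomm, hv] at h1; exact absurd h1 (lt_irrefl _)
    · exact h2.2
  · intro h x₁ x₂ hx
    rcases (hLX x₁ x₂).1 hx with h1 | ⟨hv, hle⟩
    · exact (hLX' _ _).2 (Or.inl (by rw [hcomm, hcomm]; exact hσY' h1))
    · exact (hLX' _ _).2 (Or.inr ⟨by rw [hcomm, hcomm, hv], h x₁ x₂ hv hle⟩)
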